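/- Let p be a prime and let L be a 3-dimensional unsolvable Lie algebra over Z_p whose underlying module is free of rank 3, admitting a basis (x0,x1,x2) with [x_i, x_{i+1}] = a_{i+2} x_{i+2} (indices mod 3) for nonzero a0,a1,a2 in Z_p. Then every finite-index Z_p-subalgebra M of L is just infinite: every nonzero ideal I of M has finite index in M (equivalently, I spans a 3-dimensional Q_p-subspace). -/

import Mathlib

open Submodule


lemma auxA {R : Type*} [CommRing R] [CharZero R] {L : Type*} [AddCommGroup L] [Module R L]
    (N : Submodule R L) (h : Finite (L ⧸ N)) : ∃ c : R, c ≠ 0 ∧ ∀ z : L, c • z ∈ N := by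
  refine ⟨(Nat.card (L ⧸ N) : R), ?_, ?_⟩
  · exact_mod_cast Nat.cast_ne_zero.mpr Nat.card_pos.ne'
  · intro z
    rw [← Submodule.Quotient.mk_eq_zero, Submodule.Quotient.mk_smul,
      Nat.cast_smul_eq_nsmul, card_nsmul_eq_zero']

lemma auxB (p : ℕ) [Fact p.Prime] {M : Type*} [AddCommGroup M] [Module ℤ_[p] M]
    [Module.Finite ℤ_[p] M] (N : Submodule ℤ_[p] M) (c : ℤ_[p]) (hc : c ≠ 0)
    (h : ∀ m : M, c • m ∈ N) : Finite (M ⧸ N) := by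
  set n := c.valuation with hn
  have hpn : ∀ m : M, (p : ℤ_[p]) ^ n • m ∈ N := by
    intro m
    obtain ⟨u, hu⟩ : ∃ u : ℤ_[p]ˣ, c = ↑u * (p : ℤ_[p]) ^ n :=
      ⟨_, PadicInt.unitCoeff_spec hc⟩
    have heq : (p : ℤ_[p]) ^ n • m = (u⁻¹ : ℤ_[p]ˣ) • (c • m) := by
      rw [Units.smul_def, ← mul_smul, hu, ← mul_assoc]
      simp
    rw [heq]
    exact N.smul_mem _ (h m)
  have hkill : ∀ q : M ⧸ N, (p : ℤ_[p]) ^ n • q = 0 := by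
    intro q
    obtain ⟨m, rfl⟩ := Submodule.Quotient.mk_surjective N q
    rw [← Submodule.Quotient.mk_smul, Submodule.Quotient.mk_eq_zero]
    exact hpn m
  obtain ⟨k, g, hg⟩ := Module.Finite.exists_fin (R := ℤ_[p]) (M := M)
  have hNZ : NeZero (p ^ n) := ⟨pow_ne_zero _ (Fact.out : p.Prime).ne_zero⟩
  have hsurj : Function.Surjective
      (fun d : Fin k → ZMod (p ^ n) =>
        (∑ i, ((d i).val : ℤ_[p]) • Submodule.Quotient.mk (p := N) (g i) : M ⧸ N)) := by
    intro q
    obtain ⟨m, rfl⟩ := Submodule.Quotient.mk_surjective N q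
    have hm : m ∈ Submodule.span ℤ_[p] (Set.range g) := hg ▸ Submodule.mem_top
    rw [mem_span_range_iff_exists_fun] at hm
    obtain ⟨cc, hcc⟩ := hm
    refine ⟨fun i => PadicInt.toZModPow n (cc i), ?_⟩
    have key : ∀ i : Fin k,
        (((PadicInt.toZModPow n (cc i)).val : ℤ_[p]) • Submodule.Quotient.mk (p := N) (g i) : M ⧸ N)
          = cc i • Submodule.Quotient.mk (p := N) (g i) := by
      intro i
      have hker : cc i - ((PadicInt.toZModPow n (cc i)).val : ℤ_[p])
          ∈ RingHom.ker (PadicInt.toZModPow n (p := p)) := by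
        rw [RingHom.mem_ker, map_sub, map_natCast, sub_eq_zero]
        exact (ZMod.natCast_rightInverse _).symm
      rw [PadicInt.ker_toZModPow, Ideal.mem_span_singleton] at hker
      obtain ⟨t, ht⟩ := hker
      have hz : (cc i - ((PadicInt.toZModPow n (cc i)).val : ℤ_[p]))
          • Submodule.Quotient.mk (p := N) (g i) = 0 := by
        rw [ht, mul_comm, mul_smul, hkill, smul_zero]
      rw [sub_smul, sub_eq_zero] at hz
      exact hz.symm
    simp_rw [key]
    rw [← hcc, ← Submodule.mkQ_apply, map_sum]
    simp_rw [map_smul, Submodule.mkQ_apply]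
  exact Finite.of_surjective _ hsurj


lemma sum3 {L : Type*} [AddCommMonoid L] (f : Fin 3 → L) (i : Fin 3) :
    ∑ j, f j = f i + f (i + 1) + f (i + 2) := by
  fin_cases i <;>
    simp [Fin.sum_univ_three, show (1+1 : Fin 3) = 2 from rfl, show (1+2 : Fin 3) = 0 from rfl,
      show (2+1 : Fin 3) = 0 from rfl, show (2+2 : Fin 3) = 1 from rfl] <;> abel

theorem stmt0' (p : ℕ) [Fact p.Prime]
    (L : Type*) [LieRing L] [LieAlgebra ℤ_[p] L]
    (x : Module.Basis (Fin 3) ℤ_[p] L) (a : Fin 3 → ℤ_[p]) (ha : ∀ i, a i ≠ 0)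
    (hx : ∀ i : Fin 3, ⁅x i, x (i + 1)⁆ = a (i + 2) • x (i + 2))
    (M : LieSubalgebra ℤ_[p] L)
    (hM : Finite (L ⧸ (M : Submodule ℤ_[p] L)))
    (I : LieIdeal ℤ_[p] M) (hI : I ≠ ⊥) :
    ∃ e : ℤ_[p], e ≠ 0 ∧ ∀ m : M, e • m ∈ I := by
  classical
  -- bracket relations
  have h21 : ∀ i : Fin 3, ⁅x (i+1), x i⁆ = -(a (i+2) • x (i+2)) := by
    intro i; rw [← lie_skew, hx i]
  have h02 : ∀ i : Fin 3, ⁅x i, x (i+2)⁆ = -(a (i+1) • x (i+1)) := by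
    intro i
    have h := hx (i+2)
    rw [add_assoc, show (2+1 : Fin 3) = 0 from rfl, add_zero,
      add_assoc, show (2+2 : Fin 3) = 1 from rfl] at h
    rw [← lie_skew, h]
  -- scalar with t • L ⊆ M
  obtain ⟨t, ht0, ht⟩ : ∃ t : ℤ_[p], t ≠ 0 ∧ ∀ z : L, t • z ∈ (M : Submodule ℤ_[p] L) := by
    refine ⟨(Nat.card (L ⧸ (M : Submodule ℤ_[p] L)) : ℤ_[p]), ?_, ?_⟩
    · exact_mod_cast Nat.cast_ne_zero.mpr Nat.card_pos.ne'
    · intro z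
      rw [← Submodule.Quotient.mk_eq_zero, Submodule.Quotient.mk_smul,
        Nat.cast_smul_eq_nsmul, card_nsmul_eq_zero']
  -- the predicate "lies in the image of I"
  set P : L → Prop := fun z => ∃ w : M, w ∈ I ∧ (w : L) = z with hP
  have hPsmul : ∀ (r : ℤ_[p]) (z : L), P z → P (r • z) := by
    rintro r z ⟨w, hw, rfl⟩
    exact ⟨r • w, I.smul_mem r hw, rfl⟩
  have hPadd : ∀ (z₁ z₂ : L), P z₁ → P z₂ → P (z₁ + z₂) := by
    rintro z₁ z₂ ⟨w₁, hw₁, rfl⟩ ⟨w₂, hw₂, rfl⟩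
    exact ⟨w₁ + w₂, I.add_mem hw₁ hw₂, by simp⟩
  have hPlie : ∀ (u : L) (hu : u ∈ M) (z : L), P z → P ⁅u, z⁆ := by
    rintro u hu z ⟨w, hw, rfl⟩
    exact ⟨⁅(⟨u, hu⟩ : M), w⁆, I.lie_mem hw, rfl⟩
  have htM : ∀ j : Fin 3, t • x j ∈ M := fun j => ht (x j)
  -- nonzero element of I
  obtain ⟨y, hyI, hy0⟩ : ∃ y : M, y ∈ I ∧ y ≠ 0 := by
    by_contra hcon
    push_neg at hcon
    exact hI ((LieSubmodule.eq_bot_iff _).mpr fun m hm => hcon m hm)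
  have hPy : P (↑y : L) := ⟨y, hyI, rfl⟩
  have hyL : (↑y : L) ≠ 0 := by
    intro h
    exact hy0 (by exact_mod_cast Subtype.ext h)
  set b : Fin 3 → ℤ_[p] := fun j => x.repr (↑y : L) j with hb
  obtain ⟨i, hbi⟩ : ∃ i, b i ≠ 0 := by
    by_contra hcon
    push_neg at hcon
    apply hyL
    have : x.repr (↑y : L) = 0 := Finsupp.ext fun j => hcon j
    simpa using x.repr.map_eq_zero_iff.mp this
  have hrep : (↑y : L) = b i • x i + b (i+1) • x (i+1) + b (i+2) • x (i+2) := by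
    conv_lhs => rw [← Module.Basis.sum_repr x (↑y : L)]
    exact sum3 (fun j => x.repr (↑y : L) j • x j) i
  -- first element: multiple of x i
  have key1 : ⁅t • x i, ⁅t • x i, (↑y : L)⁆⁆ + ((t*t)*(a (i+1)*a (i+2))) • (↑y : L)
      = ((t*t)*(a (i+1)*a (i+2))*(b i)) • x i := by
    rw [hrep]
    simp only [lie_add, lie_smul, smul_lie, lie_self, lie_neg, neg_neg, hx i, h02 i,
      smul_zero, add_zero, zero_add, smul_add, smul_neg, smul_smul, neg_smul]
    module
  have hP1 : P (((t*t)*(a (i+1)*a (i+2))*(b i)) • x i) := by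
    rw [← key1]
    exact hPadd _ _ (hPlie _ (htM i) _ (hPlie _ (htM i) _ hPy))
      (hPsmul _ _ hPy)
  set d0 : ℤ_[p] := (t*t)*(a (i+1)*a (i+2))*(b i) with hd0
  have hd0' : d0 ≠ 0 :=
    mul_ne_zero (mul_ne_zero (mul_ne_zero ht0 ht0) (mul_ne_zero (ha _) (ha _))) hbi
  -- second: multiple of x (i+2)
  have key2 : ⁅t • x (i+1), d0 • x i⁆ = (-(t * d0 * a (i+2))) • x (i+2) := by
    simp only [smul_lie, lie_smul, h21 i, smul_neg, smul_smul, neg_smul]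
    module
  have hP2 : P ((-(t * d0 * a (i+2))) • x (i+2)) := by
    rw [← key2]
    exact hPlie _ (htM (i+1)) _ hP1
  have hd2' : -(t * d0 * a (i+2)) ≠ 0 :=
    neg_ne_zero.mpr (mul_ne_zero (mul_ne_zero ht0 hd0') (ha _))
  -- third: multiple of x (i+1)
  have key3 : ⁅t • x i, (-(t * d0 * a (i+2))) • x (i+2)⁆
      = (t * (t * d0 * a (i+2)) * a (i+1)) • x (i+1) := by
    simp only [smul_lie, lie_smul, lie_neg, h02 i, smul_neg, smul_smul, neg_smul, neg_neg]
    module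
  have hP3 : P ((t * (t * d0 * a (i+2)) * a (i+1)) • x (i+1)) := by
    rw [← key3]
    exact hPlie _ (htM i) _ hP2
  have hd1' : t * (t * d0 * a (i+2)) * a (i+1) ≠ 0 :=
    mul_ne_zero (mul_ne_zero ht0 (mul_ne_zero (mul_ne_zero ht0 hd0') (ha _))) (ha _)
  -- for every j, a nonzero multiple of x j lies in P
  have hXgen : ∀ j : Fin 3, ∃ d : ℤ_[p], d ≠ 0 ∧ P (d • x j) := by
    intro j
    obtain ⟨k, rfl⟩ : ∃ k, j = i + k := ⟨j - i, by abel⟩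
    fin_cases k
    · exact ⟨d0, hd0', by simpa using hP1⟩
    · exact ⟨_, hd1', hP3⟩
    · exact ⟨_, hd2', hP2⟩
  choose d hd hPd using hXgen
  refine ⟨∏ j, d j, Finset.prod_ne_zero_iff.mpr (fun j _ => hd j), ?_⟩
  set e : ℤ_[p] := ∏ j, d j with he
  have hex : ∀ j : Fin 3, P (e • x j) := by
    intro j
    obtain ⟨q, hq⟩ := Finset.dvd_prod_of_mem d (Finset.mem_univ j)
    have hqe : q * d j = e := by rw [he, hq]; ring
    have h := hPsmul q _ (hPd j)
    rwa [smul_smul, hqe] at h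
  have hPz : ∀ z : L, P (e • z) := by
    intro z
    have heq : e • z = x.repr z 0 • (e • x 0) + x.repr z 1 • (e • x 1)
        + x.repr z 2 • (e • x 2) := by
      conv_lhs => rw [← Module.Basis.sum_repr x z, Fin.sum_univ_three]
      simp only [smul_add, smul_smul]
      module
    rw [heq]
    exact hPadd _ _ (hPadd _ _ (hPsmul _ _ (hex 0)) (hPsmul _ _ (hex 1))) (hPsmul _ _ (hex 2))
  intro m
  obtain ⟨w, hwI, hw⟩ := hPz (↑m : L)
  have : w = e • m := by
    apply Subtype.ext
    rw [hw]
    rfl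
  rwa [this] at hwI


/-- A 3-dimensional unsolvable `ℤ_[p]`-Lie lattice admitting a diagonalizing
basis is hereditarily just infinite: every nonzero ideal of a finite-index subalgebra `M`
has finite index in `M`. -/
theorem stmt0 (p : ℕ) [Fact p.Prime]
    (L : Type*) [LieRing L] [LieAlgebra ℤ_[p] L]
    (hus : ¬ LieAlgebra.IsSolvable L)
    (x : Module.Basis (Fin 3) ℤ_[p] L) (a : Fin 3 → ℤ_[p]) (ha : ∀ i, a i ≠ 0)
    (hx : ∀ i : Fin 3, ⁅x i, x (i + 1)⁆ = a (i + 2) • x (i + 2))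
    (M : LieSubalgebra ℤ_[p] L)
    (hM : Finite (L ⧸ (M : Submodule ℤ_[p] L)))
    (I : LieIdeal ℤ_[p] M) (hI : I ≠ ⊥) :
    Finite (M ⧸ (I : Submodule ℤ_[p] M)) := by
  obtain ⟨e, he, hmem⟩ := stmt0' p L x a ha hx M hM I hI
  have hfinL : Module.Finite ℤ_[p] L := Module.Finite.of_basis x
  have hnoe : IsNoetherian ℤ_[p] L := isNoetherian_of_isNoetherianRing_of_finite ℤ_[p] L
  have hMfg : (M : Submodule ℤ_[p] L).FG := IsNoetherian.noetherian _
  have hMfin : Module.Finite ℤ_[p] ↥M := Module.Finite.iff_fg.mpr hMfg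
  exact auxB p (I : Submodule ℤ_[p] ↥M) e he (fun m => hmem m)
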